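/- arXiv:2308.16363 — 2 statements merged into one kernel-verified Lean document; each statement's English description precedes it below -/
import Mathlib

section
/- In a CD neighborhood graph with degout(v) ≥ 1 and degin(v) + n_K ≥ 1, the normalized betweenness B^CD(v) = B(v)/(degout(v)·(degin(v) + n_K)) satisfies B^CD(v) = degin(v)/(degin(v) + n_K) − (Σ_{j ∈ J} (degout(j) − 1)) / (degout(v)·(degin(v) + n_K)). -/
open Finset

variable {V : Type*}

/-- `l` is a directed path from `s` to `t` in the directed graph with adjacency
relation `adj`: consecutive vertices are joined by edges, it starts at `s`,
ends at `t`, and has no repeated vertices. -/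
def IsDirPath (adj : V → V → Prop) (s t : V) (l : List V) : Prop :=
  l.Chain' adj ∧ l.head? = some s ∧ l.getLast? = some t ∧ l.Nodup

/-- `l` is a shortest directed path from `s` to `t`. -/
def IsShortestDirPath (adj : V → V → Prop) (s t : V) (l : List V) : Prop :=
  IsDirPath adj s t l ∧ ∀ l', IsDirPath adj s t l' → l.length ≤ l'.length

/-- `x` occurs as an interior vertex of the list `l` (i.e. `x` is a member of `l`
which is neither the first nor the last entry). -/
def ListInterior (l : List V) (x : V) : Prop := x ∈ l.tail.dropLast

/-- `σ(s,t)`: the number of shortest directed paths from `s` to `t`. -/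
noncomputable def numShortest (adj : V → V → Prop) (s t : V) : ℕ :=
  {l : List V | IsShortestDirPath adj s t l}.ncard

/-- `σ(s,t∣x)`: the number of shortest directed paths from `s` to `t` that pass
through `x` as an interior vertex. -/
noncomputable def numShortestThrough (adj : V → V → Prop) (s t x : V) : ℕ :=
  {l : List V | IsShortestDirPath adj s t l ∧ ListInterior l x}.ncard

/-- A CD Index neighborhood graph: a directed graph whose vertex set is the
disjoint union `{v} ∪ I ∪ J ∪ K ∪ T` of the focal vertex `v` and four pairwise
disjoint finite sets, with the edge structure of the CD Index neighborhood. -/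
structure CDGraph (V : Type*) where
  /-- the adjacency relation: `adj u w` means there is a directed edge `u → w` -/
  adj : V → V → Prop
  /-- the focal vertex -/
  v : V
  /-- the set of `I`-type vertices -/
  I : Finset V
  /-- the set of `J`-type vertices -/
  J : Finset V
  /-- the set of `K`-type vertices -/
  K : Finset V
  /-- the set of vertices cited by `v` -/
  T : Finset V
  v_not_I : v ∉ I
  v_not_J : v ∉ J
  v_not_K : v ∉ K
  v_not_T : v ∉ T
  disj_IJ : Disjoint I J
  disj_IK : Disjoint I K
  disj_IT : Disjoint I T
  disj_JK : Disjoint J K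
  disj_JT : Disjoint J T
  disj_KT : Disjoint K T
  /-- every vertex is `v` or belongs to one of `I`, `J`, `K`, `T` -/
  cover : ∀ x : V, x = v ∨ x ∈ I ∨ x ∈ J ∨ x ∈ K ∨ x ∈ T
  /-- `v` has an out-edge to each element of `T` and no other out-edges -/
  v_out : ∀ w, adj v w ↔ w ∈ T
  /-- each `i ∈ I` has exactly one out-edge, namely to `v` -/
  I_out : ∀ i ∈ I, ∀ w, adj i w ↔ w = v
  /-- each `j ∈ J` has an out-edge to `v` -/
  J_cites_v : ∀ j ∈ J, adj j v
  /-- each `j ∈ J` has at least one out-edge into `T` -/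
  J_cites_T : ∀ j ∈ J, ∃ t ∈ T, adj j t
  /-- every out-edge of `j ∈ J` goes to `{v} ∪ T` -/
  J_out : ∀ j ∈ J, ∀ w, adj j w → w = v ∨ w ∈ T
  /-- each `k ∈ K` has at least one out-edge -/
  K_cites : ∀ k ∈ K, ∃ w, adj k w
  /-- every out-edge of `k ∈ K` goes into `T` -/
  K_out : ∀ k ∈ K, ∀ w, adj k w → w ∈ T
  /-- vertices in `T` have no out-edges -/
  T_out : ∀ t ∈ T, ∀ w, ¬ adj t w

/-- The out-degree of a vertex `u`: the number of out-neighbors of `u`. -/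
noncomputable def CDGraph.degout (G : CDGraph V) (u : V) : ℕ :=
  {w | G.adj u w}.ncard

/-- The in-degree of the focal vertex `v`, namely `n_I + n_J`. -/
def CDGraph.degin (G : CDGraph V) : ℕ := G.I.card + G.J.card

/-- The raw betweenness of the focal vertex `v`:
`B(v) = Σ_{s ≠ v} Σ_{t ≠ v} σ(s,t∣v)/σ(s,t)`, where terms with `σ(s,t) = 0`
count as `0` (division by zero in `ℝ` yields `0`). -/
noncomputable def CDGraph.B [Fintype V] [DecidableEq V] (G : CDGraph V) : ℝ :=
  ∑ s ∈ univ.erase G.v, ∑ t ∈ univ.erase G.v,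
    (numShortestThrough G.adj s t G.v : ℝ) / (numShortest G.adj s t : ℝ)

namespace CDGraph

open scoped Classical

variable [DecidableEq V] (G : CDGraph V)

lemma adj_target {x y : V} (h : G.adj x y) : y = G.v ∨ y ∈ G.T := by
  rcases G.cover x with rfl | hx | hx | hx | hx
  · exact Or.inr ((G.v_out y).1 h)
  · exact Or.inl ((G.I_out x hx y).1 h)
  · exact G.J_out x hx y h
  · exact Or.inr (G.K_out x hx y h)
  · exact absurd h (G.T_out x hx y)

lemma adj_src_v {x : V} (h : G.adj x G.v) : x ∈ G.I ∪ G.J := by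
  rcases G.cover x with rfl | hx | hx | hx | hx
  · exact absurd ((G.v_out _).1 h) G.v_not_T
  · exact Finset.mem_union_left _ hx
  · exact Finset.mem_union_right _ hx
  · exact absurd (G.K_out x hx _ h) G.v_not_T
  · exact absurd h (G.T_out x hx _)

lemma adj_ne {x y : V} (h : G.adj x y) : x ≠ y := by
  rintro rfl
  rcases G.adj_target h with rfl | hT
  · have := G.adj_src_v h
    rw [Finset.mem_union] at this
    rcases this with h' | h'
    · exact G.v_not_I h'
    · exact G.v_not_J h'
  · exact G.T_out x hT x h

lemma mid_eq_v {x y z : V} (hxy : G.adj x y) (hyz : G.adj y z) : y = G.v := by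
  rcases G.adj_target hxy with h | h
  · exact h
  · exact absurd hyz (G.T_out y h z)

lemma path_classify (s t : V) (l : List V) (h : IsDirPath G.adj s t l) :
    (l = [s] ∧ t = s) ∨
    (l = [s, t] ∧ G.adj s t ∧ s ≠ t) ∨
    (l = [s, G.v, t] ∧ G.adj s G.v ∧ G.adj G.v t ∧ s ≠ t) := by
  obtain ⟨hc, hh, hl, hn⟩ := h
  match l with
  | [] => simp at hh
  | [a] =>
    simp only [List.head?_cons, Option.some.injEq] at hh
    simp only [List.getLast?_singleton, Option.some.injEq] at hl
    subst hh; exact Or.inl ⟨rfl, hl.symm⟩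
  | [a, b] =>
    simp only [List.head?_cons, Option.some.injEq] at hh
    have hl' : b = t := by simpa using hl
    subst hh; subst hl'
    simp only [List.Chain', List.isChain_cons_cons, List.isChain_singleton, and_true] at hc
    have : a ≠ b := by simpa using hn
    exact Or.inr (Or.inl ⟨rfl, hc, this⟩)
  | [a, b, c] =>
    simp only [List.head?_cons, Option.some.injEq] at hh
    have hl' : c = t := by simpa using hl
    subst hh; subst hl'
    simp only [List.Chain', List.isChain_cons_cons, List.isChain_singleton, and_true] at hc
    obtain ⟨h1, h2⟩ := hc
    have hb : b = G.v := G.mid_eq_v h1 h2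
    subst hb
    have hac : a ≠ c := by simp at hn; tauto
    exact Or.inr (Or.inr ⟨rfl, h1, h2, hac⟩)
  | a :: b :: c :: d :: r =>
    exfalso
    simp only [List.Chain', List.isChain_cons_cons] at hc
    obtain ⟨h1, h2, h3, -⟩ := hc
    have hb : b = G.v := G.mid_eq_v h1 h2
    have hcv : c = G.v := G.mid_eq_v h2 h3
    simp only [List.nodup_cons, List.mem_cons] at hn
    exact hn.2.1 (Or.inl (hb.trans hcv.symm))

lemma one_le_path_length {s t : V} {l : List V} (h : IsDirPath G.adj s t l) :
    1 ≤ l.length := by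
  rcases l with _ | ⟨a, l⟩
  · simp [IsDirPath] at h
  · simp

lemma two_le_path_length {s t : V} {l : List V} (h : IsDirPath G.adj s t l)
    (hst : s ≠ t) : 2 ≤ l.length := by
  rcases G.path_classify s t l h with ⟨rfl, h'⟩ | ⟨rfl, -⟩ | ⟨rfl, -⟩
  · exact absurd h'.symm hst
  · simp
  · simp

lemma isDirPath_single (s : V) : IsDirPath G.adj s s [s] :=
  ⟨by simp [List.Chain'], by simp, by simp, by simp⟩

lemma isDirPath_pair {s t : V} (h : G.adj s t) : IsDirPath G.adj s t [s, t] :=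
  ⟨by simp [List.Chain', h], by simp, by simp, by simp [G.adj_ne h]⟩

lemma isDirPath_triple {s t : V} (h1 : G.adj s G.v) (h2 : G.adj G.v t)
    (hst : s ≠ t) : IsDirPath G.adj s t [s, G.v, t] :=
  ⟨by simp [List.Chain', h1, h2], by simp, by simp,
   by simp [G.adj_ne h1, G.adj_ne h2, hst]⟩

lemma shortestSet_self (s : V) :
    {l : List V | IsShortestDirPath G.adj s s l} = {[s]} := by
  ext l
  simp only [Set.mem_setOf_eq, Set.mem_singleton_iff]
  constructor
  · rintro ⟨hp, -⟩
    rcases G.path_classify s s l hp with ⟨h, -⟩ | ⟨-, -, h⟩ | ⟨-, -, -, h⟩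
    · exact h
    · exact absurd rfl h
    · exact absurd rfl h
  · rintro rfl
    exact ⟨G.isDirPath_single s, fun l' hl' => G.one_le_path_length hl'⟩

lemma shortestSet_adj {s t : V} (hadj : G.adj s t) :
    {l : List V | IsShortestDirPath G.adj s t l} = {[s, t]} := by
  have hst : s ≠ t := G.adj_ne hadj
  ext l
  simp only [Set.mem_setOf_eq, Set.mem_singleton_iff]
  constructor
  · rintro ⟨hp, hmin⟩
    have hle := hmin [s, t] (G.isDirPath_pair hadj)
    rcases G.path_classify s t l hp with ⟨-, h⟩ | ⟨h, -⟩ | ⟨rfl, -⟩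
    · exact absurd h.symm hst
    · exact h
    · simp at hle
  · rintro rfl
    exact ⟨G.isDirPath_pair hadj, fun l' hl' => G.two_le_path_length hl' hst⟩

lemma ne_of_via_v {s t : V} (h1 : G.adj s G.v) (h2 : G.adj G.v t) : s ≠ t := by
  rintro rfl
  have ht : s ∈ G.T := (G.v_out s).1 h2
  exact G.T_out s ht G.v h1

lemma shortestSet_via_v {s t : V} (h1 : G.adj s G.v) (h2 : G.adj G.v t)
    (h3 : ¬ G.adj s t) :
    {l : List V | IsShortestDirPath G.adj s t l} = {[s, G.v, t]} := by
  have hst : s ≠ t := G.ne_of_via_v h1 h2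
  have hpaths : ∀ l, IsDirPath G.adj s t l → l = [s, G.v, t] := by
    intro l hl
    rcases G.path_classify s t l hl with ⟨-, h⟩ | ⟨-, h, -⟩ | ⟨h, -⟩
    · exact absurd h.symm hst
    · exact absurd h h3
    · exact h
  ext l
  simp only [Set.mem_setOf_eq, Set.mem_singleton_iff]
  constructor
  · rintro ⟨hp, -⟩
    exact hpaths l hp
  · rintro rfl
    refine ⟨G.isDirPath_triple h1 h2 hst, fun l' hl' => ?_⟩
    rw [hpaths l' hl']

lemma throughSet_empty {s t : V}
    (hfail : ¬ (G.adj s G.v ∧ G.adj G.v t ∧ ¬ G.adj s t)) :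
    {l : List V | IsShortestDirPath G.adj s t l ∧ ListInterior l G.v} = ∅ := by
  ext l
  simp only [Set.mem_setOf_eq, Set.mem_empty_iff_false, iff_false, not_and]
  rintro ⟨hp, hmin⟩ hint
  rcases G.path_classify s t l hp with ⟨rfl, -⟩ | ⟨rfl, -⟩ | ⟨rfl, h1, h2, hst⟩
  · simp [ListInterior] at hint
  · simp [ListInterior] at hint
  · by_cases hadj : G.adj s t
    · have := hmin [s, t] (G.isDirPath_pair hadj)
      simp at this
    · exact hfail ⟨h1, h2, hadj⟩

lemma ratio_eq (s t : V) :
    (numShortestThrough G.adj s t G.v : ℝ) / (numShortest G.adj s t : ℝ)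
      = if G.adj s G.v ∧ G.adj G.v t ∧ ¬ G.adj s t then 1 else 0 := by
  split_ifs with h
  · obtain ⟨h1, h2, h3⟩ := h
    have hS : {l : List V | IsShortestDirPath G.adj s t l} = {[s, G.v, t]} :=
      G.shortestSet_via_v h1 h2 h3
    have hT : {l : List V | IsShortestDirPath G.adj s t l ∧ ListInterior l G.v}
        = {[s, G.v, t]} := by
      ext l
      simp only [Set.mem_setOf_eq, Set.mem_singleton_iff]
      constructor
      · rintro ⟨hp, -⟩
        have : l ∈ {l : List V | IsShortestDirPath G.adj s t l} := hp
        rwa [hS] at this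
      · rintro rfl
        refine ⟨?_, by simp [ListInterior]⟩
        have : [s, G.v, t] ∈ ({[s, G.v, t]} : Set (List V)) := rfl
        rwa [← hS] at this
    unfold numShortest numShortestThrough
    rw [hS, hT, Set.ncard_singleton]
    norm_num
  · have : numShortestThrough G.adj s t G.v = 0 := by
      unfold numShortestThrough
      rw [G.throughSet_empty h]
      simp
    rw [this]
    simp

lemma adj_v_iff (s : V) : G.adj s G.v ↔ s ∈ G.I ∪ G.J := by
  constructor
  · exact G.adj_src_v
  · intro hs
    rcases Finset.mem_union.1 hs with h | h
    · exact (G.I_out s h G.v).2 rfl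
    · exact G.J_cites_v s h

lemma degout_v_eq : G.degout G.v = G.T.card := by
  unfold degout
  have : {w | G.adj G.v w} = ↑G.T := by
    ext w; simp [G.v_out]
  rw [this, Set.ncard_coe_finset]

lemma degout_J_eq {j : V} (hj : j ∈ G.J) :
    G.degout j = (G.T.filter (G.adj j)).card + 1 := by
  unfold degout
  have : {w | G.adj j w} = ↑(insert G.v (G.T.filter (G.adj j))) := by
    ext w
    simp only [Set.mem_setOf_eq, Finset.coe_insert, Set.mem_insert_iff,
      Finset.coe_filter, Finset.mem_filter]
    constructor
    · intro h
      rcases G.J_out j hj w h with rfl | hw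
      · exact Or.inl rfl
      · exact Or.inr ⟨hw, h⟩
    · rintro (rfl | ⟨-, h⟩)
      · exact G.J_cites_v j hj
      · exact h
  rw [this, Set.ncard_coe_finset,
    Finset.card_insert_of_notMem (fun hv => G.v_not_T (Finset.mem_filter.1 hv).1)]

end CDGraph

/-- In a CD neighborhood graph with `degout(v) ≥ 1` and
`degin(v) + n_K ≥ 1`, the normalized betweenness
`B^CD(v) = B(v)/(degout(v)·(degin(v) + n_K))` satisfies
`B^CD(v) = degin(v)/(degin(v) + n_K)
  − (Σ_{j ∈ J} (degout(j) − 1)) / (degout(v)·(degin(v) + n_K))`. -/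
theorem cd_normalized_betweenness_formula [Fintype V] [DecidableEq V] (G : CDGraph V)
    (h1 : 1 ≤ G.degout G.v) (h2 : 1 ≤ G.degin + G.K.card) :
    G.B / ((G.degout G.v : ℝ) * ((G.degin : ℝ) + (G.K.card : ℝ)))
      = (G.degin : ℝ) / ((G.degin : ℝ) + (G.K.card : ℝ))
        - (∑ j ∈ G.J, ((G.degout j : ℝ) - 1))
            / ((G.degout G.v : ℝ) * ((G.degin : ℝ) + (G.K.card : ℝ))) := by
  classical
  have hIJv : G.v ∉ G.I ∪ G.J := by
    simp [G.v_not_I, G.v_not_J]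
  -- Step 1: rewrite B as a sum of indicators
  have step1 : G.B = ∑ s ∈ univ.erase G.v, ∑ t ∈ univ.erase G.v,
      (if s ∈ G.I ∪ G.J ∧ t ∈ G.T ∧ ¬ G.adj s t then (1 : ℝ) else 0) := by
    unfold CDGraph.B
    refine Finset.sum_congr rfl fun s _ => Finset.sum_congr rfl fun t _ => ?_
    rw [G.ratio_eq s t]
    refine if_congr ?_ rfl rfl
    rw [G.adj_v_iff, G.v_out]
  -- Step 2: shrink the domains
  have step2 : G.B = ∑ s ∈ G.I ∪ G.J, ∑ t ∈ G.T,
      (if ¬ G.adj s t then (1 : ℝ) else 0) := by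
    rw [step1]
    rw [← Finset.sum_subset (s₁ := G.I ∪ G.J)
      (fun s hs => Finset.mem_erase.2 ⟨fun h => hIJv (by rwa [h] at hs), Finset.mem_univ s⟩)
      (fun s _ hs => by
        refine Finset.sum_eq_zero fun t _ => if_neg ?_
        tauto)]
    refine Finset.sum_congr rfl fun s hs => ?_
    rw [← Finset.sum_subset (s₁ := G.T)
      (fun t ht => Finset.mem_erase.2 ⟨fun h => G.v_not_T (by rwa [h] at ht), Finset.mem_univ t⟩)
      (fun t _ ht => if_neg (by tauto))]
    refine Finset.sum_congr rfl fun t ht => ?_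
    simp [hs, ht]
  -- Step 3: count
  have count : ∀ s, ∑ t ∈ G.T, (if ¬ G.adj s t then (1 : ℝ) else 0)
      = (G.T.card : ℝ) - ((G.T.filter (G.adj s)).card : ℝ) := by
    intro s
    rw [Finset.sum_boole]
    have h := Finset.card_filter_add_card_filter_not
      (s := G.T) (p := G.adj s)
    have : ((G.T.filter (G.adj s)).card : ℝ)
        + ((G.T.filter fun t => ¬ G.adj s t).card : ℝ) = (G.T.card : ℝ) := by
      exact_mod_cast congrArg (Nat.cast : ℕ → ℝ) h
    linarith
  have hI : ∀ s ∈ G.I, (G.T.filter (G.adj s)) = ∅ := by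
    intro s hs
    refine Finset.filter_eq_empty_iff.2 fun {t} ht hadj => ?_
    exact G.v_not_T (((G.I_out s hs t).1 hadj) ▸ ht)
  have hJ : ∀ j ∈ G.J, ((G.T.filter (G.adj j)).card : ℝ) = (G.degout j : ℝ) - 1 := by
    intro j hj
    rw [G.degout_J_eq hj]
    push_cast
    ring
  have hB : G.B = (G.degin : ℝ) * (G.degout G.v : ℝ)
      - ∑ j ∈ G.J, ((G.degout j : ℝ) - 1) := by
    rw [step2, Finset.sum_union G.disj_IJ]
    have e1 : ∑ s ∈ G.I, ∑ t ∈ G.T, (if ¬ G.adj s t then (1 : ℝ) else 0)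
        = (G.I.card : ℝ) * (G.T.card : ℝ) := by
      have e1' : ∀ s ∈ G.I, ∑ t ∈ G.T, (if ¬ G.adj s t then (1 : ℝ) else 0)
          = (G.T.card : ℝ) := fun s hs => by rw [count s, hI s hs]; simp
      rw [Finset.sum_congr rfl e1']
      simp [mul_comm]
    have e2 : ∑ s ∈ G.J, ∑ t ∈ G.T, (if ¬ G.adj s t then (1 : ℝ) else 0)
        = (G.J.card : ℝ) * (G.T.card : ℝ) - ∑ j ∈ G.J, ((G.degout j : ℝ) - 1) := by
      have e2' : ∀ s ∈ G.J, ∑ t ∈ G.T, (if ¬ G.adj s t then (1 : ℝ) else 0)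
          = (G.T.card : ℝ) - ((G.degout s : ℝ) - 1) := fun s hs => by
        rw [count s, hJ s hs]
      rw [Finset.sum_congr rfl e2', Finset.sum_sub_distrib]
      simp [mul_comm]
    rw [e1, e2, G.degout_v_eq]
    unfold CDGraph.degin
    push_cast
    ring
  have hD : (G.degout G.v : ℝ) ≠ 0 := by
    have : (0 : ℝ) < (G.degout G.v : ℝ) := by exact_mod_cast h1
    linarith
  have hM : (G.degin : ℝ) + (G.K.card : ℝ) ≠ 0 := by
    have : (1 : ℝ) ≤ (G.degin : ℝ) + (G.K.card : ℝ) := by exact_mod_cast h2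
    linarith
  rw [hB]
  field_simp
end

section
/- In a CD neighborhood graph with degout(v) ≥ 1, degin(v) + n_K ≥ 1 and n_I + n_J + n_K ≥ 1, the difference between the normalized betweenness and the CD Index equals the explicit shift constant: B(v)/(degout(v)·(degin(v) + n_K)) − (n_I − n_J)/(n_I + n_J + n_K) = 2·n_J/(degin(v) + n_K) − (Σ_{j ∈ J} (degout(j) − 1)) / (degout(v)·(degin(v) + n_K)). -/
open Finset

variable {V : Type*}

-- auxiliary section (to be inserted before the theorem)
section CDAux

variable {V : Type*}

lemma cd_adj_target (G : CDGraph V) {u w : V} (h : G.adj u w) : w = G.v ∨ w ∈ G.T := by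
  rcases G.cover u with rfl | hu | hu | hu | hu
  · exact Or.inr ((G.v_out w).mp h)
  · exact Or.inl ((G.I_out u hu w).mp h)
  · exact G.J_out u hu w h
  · exact Or.inr (G.K_out u hu w h)
  · exact absurd h (G.T_out u hu w)

lemma cd_source_not_T (G : CDGraph V) {u w : V} (h : G.adj u w) : u ∉ G.T :=
  fun hu => G.T_out u hu w h

lemma cd_no_self_adj (G : CDGraph V) {u : V} (h : G.adj u u) : False := by
  rcases cd_adj_target G h with rfl | hu
  · exact G.v_not_T ((G.v_out _).mp h)
  · exact cd_source_not_T G h hu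

lemma cd_adj_ne (G : CDGraph V) {u w : V} (h : G.adj u w) : u ≠ w := by
  rintro rfl; exact cd_no_self_adj G h

lemma cd_adj_source_v (G : CDGraph V) {s : V} (h : G.adj s G.v) : s ∈ G.I ∨ s ∈ G.J := by
  rcases G.cover s with rfl | hs | hs | hs | hs
  · exact absurd ((G.v_out _).mp h) G.v_not_T
  · exact Or.inl hs
  · exact Or.inr hs
  · exact absurd (G.K_out s hs _ h) G.v_not_T
  · exact absurd h (G.T_out s hs _)

lemma cd_path_classify (G : CDGraph V) {s t : V} {l : List V}
    (h : IsDirPath G.adj s t l) :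
    (s = t ∧ l = [s]) ∨ (G.adj s t ∧ l = [s, t]) ∨
      (G.adj s G.v ∧ t ∈ G.T ∧ l = [s, G.v, t]) := by
  obtain ⟨hc, hh, hl, hn⟩ := h
  rcases l with _ | ⟨a, _ | ⟨b, _ | ⟨c, _ | ⟨d, l₄⟩⟩⟩⟩
  · simp at hh
  · simp at hh hl
    subst hh; exact Or.inl ⟨hl, rfl⟩
  · simp at hh hl
    rw [List.Chain', List.isChain_cons_cons] at hc
    subst hh; subst hl
    exact Or.inr (Or.inl ⟨hc.1, rfl⟩)
  · simp at hh hl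
    rw [List.Chain', List.isChain_cons_cons, List.isChain_cons_cons] at hc
    obtain ⟨h1, h2, -⟩ := hc
    subst hh; subst hl
    have hb : b = G.v := by
      rcases cd_adj_target G h1 with rfl | hb
      · rfl
      · exact absurd hb (cd_source_not_T G h2)
    subst hb
    exact Or.inr (Or.inr ⟨h1, (G.v_out _).mp h2, rfl⟩)
  · exfalso
    rw [List.Chain', List.isChain_cons_cons, List.isChain_cons_cons, List.isChain_cons_cons] at hc
    obtain ⟨h1, h2, h3, -⟩ := hc
    have hb : b = G.v := by
      rcases cd_adj_target G h1 with rfl | hb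
      · rfl
      · exact absurd hb (cd_source_not_T G h2)
    subst hb
    exact G.T_out c ((G.v_out _).mp h2) d h3

lemma cd_dirpath_single (adj : V → V → Prop) (s : V) : IsDirPath adj s s [s] := by
  refine ⟨?_, ?_, ?_, ?_⟩ <;> simp [List.Chain']

lemma cd_dirpath_pair {adj : V → V → Prop} {s t : V} (h : adj s t) (hne : s ≠ t) :
    IsDirPath adj s t [s, t] := by
  refine ⟨?_, ?_, ?_, ?_⟩ <;> simp [h, hne, List.Chain']

lemma cd_dirpath_triple {adj : V → V → Prop} {s x t : V} (h1 : adj s x) (h2 : adj x t)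
    (hsx : s ≠ x) (hst : s ≠ t) (hxt : x ≠ t) : IsDirPath adj s t [s, x, t] := by
  refine ⟨?_, ?_, ?_, ?_⟩ <;> simp [h1, h2, hsx, hst, hxt, List.Chain', List.isChain_cons_cons]

lemma cd_shortest_of_unique {adj : V → V → Prop} {s t : V} {l₀ : List V}
    (h : ∀ l, IsDirPath adj s t l ↔ l = l₀) :
    {l : List V | IsShortestDirPath adj s t l} = {l₀} := by
  ext l
  simp only [Set.mem_setOf_eq, Set.mem_singleton_iff, IsShortestDirPath]
  constructor
  · rintro ⟨hp, -⟩; exact (h l).mp hp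
  · intro hl
    subst hl
    exact ⟨(h _).mpr rfl, fun l' hl' => by rw [(h l').mp hl']⟩

lemma cd_paths_diag (G : CDGraph V) (s : V) :
    ∀ l, IsDirPath G.adj s s l ↔ l = [s] := by
  intro l
  constructor
  · intro h
    rcases cd_path_classify G h with ⟨-, rfl⟩ | ⟨ha, -⟩ | ⟨h1, h2, -⟩
    · rfl
    · exact absurd ha (fun ha => cd_no_self_adj G ha)
    · exact absurd h2 (cd_source_not_T G h1)
  · rintro rfl; exact cd_dirpath_single _ s

lemma cd_shortest_adj (G : CDGraph V) {s t : V} (h : G.adj s t) :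
    {l : List V | IsShortestDirPath G.adj s t l} = {[s, t]} := by
  have hne := cd_adj_ne G h
  ext l
  simp only [Set.mem_setOf_eq, Set.mem_singleton_iff, IsShortestDirPath]
  constructor
  · rintro ⟨hp, hmin⟩
    rcases cd_path_classify G hp with ⟨rfl, rfl⟩ | ⟨-, rfl⟩ | ⟨h1, h2, rfl⟩
    · exact absurd rfl hne
    · rfl
    · exfalso
      have := hmin [s, t] (cd_dirpath_pair h hne)
      simp at this
  · rintro rfl
    refine ⟨cd_dirpath_pair h hne, fun l' hl' => ?_⟩
    rcases cd_path_classify G hl' with ⟨rfl, rfl⟩ | ⟨-, rfl⟩ | ⟨-, -, rfl⟩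
    · exact absurd rfl hne
    · simp
    · simp

lemma cd_shortest_through (G : CDGraph V) {s t : V} (hsv : s ≠ G.v)
    (hna : ¬ G.adj s t) (hv : G.adj s G.v) (ht : t ∈ G.T) :
    {l : List V | IsShortestDirPath G.adj s t l} = {[s, G.v, t]} := by
  have hst : s ≠ t := by rintro rfl; exact cd_source_not_T G hv ht
  have hvt : G.v ≠ t := by rintro rfl; exact G.v_not_T ht
  refine cd_shortest_of_unique (fun l => ⟨fun h => ?_, ?_⟩)
  · rcases cd_path_classify G h with ⟨rfl, rfl⟩ | ⟨ha, -⟩ | ⟨-, -, rfl⟩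
    · exact absurd rfl hst
    · exact absurd ha hna
    · rfl
  · rintro rfl
    exact cd_dirpath_triple hv ((G.v_out t).mpr ht) hsv hst hvt

lemma cd_shortest_none (G : CDGraph V) {s t : V} (hst : s ≠ t)
    (hna : ¬ G.adj s t) (h : ¬ (G.adj s G.v ∧ t ∈ G.T)) :
    {l : List V | IsShortestDirPath G.adj s t l} = ∅ := by
  rw [Set.eq_empty_iff_forall_notMem]
  rintro l ⟨hp, -⟩
  rcases cd_path_classify G hp with ⟨rfl, -⟩ | ⟨ha, -⟩ | ⟨h1, h2, -⟩
  · exact hst rfl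
  · exact hna ha
  · exact h ⟨h1, h2⟩

lemma cd_through_zero {adj : V → V → Prop} {s t x : V} {l₀ : List V}
    (h : {l : List V | IsShortestDirPath adj s t l} = {l₀})
    (hint : ¬ ListInterior l₀ x) : numShortestThrough adj s t x = 0 := by
  rw [numShortestThrough]
  convert Set.ncard_empty (List V)
  rw [Set.eq_empty_iff_forall_notMem]
  rintro l ⟨h1, h2⟩
  have hl : l = l₀ := by
    have := Set.ext_iff.mp h l
    simpa using this.mp h1
  rw [hl] at h2
  exact hint h2

lemma cd_through_one {adj : V → V → Prop} {s t x : V} {l₀ : List V}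
    (h : {l : List V | IsShortestDirPath adj s t l} = {l₀})
    (hint : ListInterior l₀ x) : numShortestThrough adj s t x = 1 := by
  rw [numShortestThrough]
  have heq : {l : List V | IsShortestDirPath adj s t l ∧ ListInterior l x} = {l₀} := by
    ext l
    have hl := Set.ext_iff.mp h l
    simp only [Set.mem_setOf_eq, Set.mem_singleton_iff] at *
    constructor
    · rintro ⟨h1, -⟩; exact hl.mp h1
    · rintro rfl; exact ⟨hl.mpr rfl, hint⟩
  rw [heq, Set.ncard_singleton]

lemma cd_ratio_eq (G : CDGraph V) {s t : V} (hsv : s ≠ G.v)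
    [Decidable (¬ G.adj s t ∧ G.adj s G.v ∧ t ∈ G.T)] :
    (numShortestThrough G.adj s t G.v : ℝ) / (numShortest G.adj s t : ℝ)
      = if ¬ G.adj s t ∧ G.adj s G.v ∧ t ∈ G.T then 1 else 0 := by
  by_cases hc : ¬ G.adj s t ∧ G.adj s G.v ∧ t ∈ G.T
  · rw [if_pos hc]
    obtain ⟨hna, hv, ht⟩ := hc
    have hset := cd_shortest_through G hsv hna hv ht
    have h1 : numShortest G.adj s t = 1 := by
      rw [numShortest, hset, Set.ncard_singleton]
    have h2 : numShortestThrough G.adj s t G.v = 1 :=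
      cd_through_one hset (by simp [ListInterior])
    rw [h1, h2]; norm_num
  · rw [if_neg hc]
    have hnum : numShortestThrough G.adj s t G.v = 0 := by
      by_cases hd : s = t
      · subst hd
        exact cd_through_zero (cd_shortest_of_unique (cd_paths_diag G s))
          (by simp [ListInterior])
      · by_cases hadj : G.adj s t
        · exact cd_through_zero (cd_shortest_adj G hadj) (by simp [ListInterior])
        · have hnone : ¬ (G.adj s G.v ∧ t ∈ G.T) := fun hp => hc ⟨hadj, hp.1, hp.2⟩
          have hset := cd_shortest_none G hd hadj hnone
          rw [numShortestThrough]
          convert Set.ncard_empty (List V)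
          rw [Set.eq_empty_iff_forall_notMem]
          rintro l ⟨h1, -⟩
          rw [Set.eq_empty_iff_forall_notMem] at hset
          exact hset l h1
    simp [hnum]

lemma cd_degout_v_eq (G : CDGraph V) : G.degout G.v = G.T.card := by
  have hset : {w | G.adj G.v w} = ↑G.T := by
    ext w; simp [G.v_out w]
  rw [CDGraph.degout, hset, Set.ncard_coe_finset]

lemma cd_degout_J_eq (G : CDGraph V) {j : V} (hj : j ∈ G.J) [DecidableEq V]
    [DecidablePred (G.adj j)] :
    G.degout j = (G.T.filter (fun t => G.adj j t)).card + 1 := by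
  have hset : {w | G.adj j w} = ↑(insert G.v (G.T.filter (fun t => G.adj j t))) := by
    ext w
    simp only [Set.mem_setOf_eq, Finset.coe_insert, Set.mem_insert_iff, Finset.mem_coe,
      Finset.mem_filter]
    constructor
    · intro h
      rcases G.J_out j hj w h with rfl | hw
      · exact Or.inl rfl
      · exact Or.inr ⟨hw, h⟩
    · rintro (rfl | ⟨-, h⟩)
      · exact G.J_cites_v j hj
      · exact h
  rw [CDGraph.degout, hset, Set.ncard_coe_finset,
    Finset.card_insert_of_notMem (by simp [G.v_not_T])]

open Classical in
lemma cd_B_eq [Fintype V] [DecidableEq V] (G : CDGraph V) :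
    G.B = (G.I.card : ℝ) * (G.T.card : ℝ) + ((G.J.card : ℝ) * (G.T.card : ℝ)
      - ∑ j ∈ G.J, ((G.degout j : ℝ) - 1)) := by
  rw [CDGraph.B]
  have step1 : ∀ s ∈ univ.erase G.v,
      (∑ t ∈ univ.erase G.v,
        (numShortestThrough G.adj s t G.v : ℝ) / (numShortest G.adj s t : ℝ))
      = ∑ t ∈ G.T, (if ¬ G.adj s t ∧ G.adj s G.v then (1:ℝ) else 0) := by
    intro s hs
    have hsv : s ≠ G.v := (Finset.mem_erase.mp hs).1
    have e1 : (∑ t ∈ univ.erase G.v,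
        (numShortestThrough G.adj s t G.v : ℝ) / (numShortest G.adj s t : ℝ))
        = ∑ t ∈ univ.erase G.v,
          (if ¬ G.adj s t ∧ G.adj s G.v ∧ t ∈ G.T then (1:ℝ) else 0) :=
      Finset.sum_congr rfl (fun t _ => cd_ratio_eq G (t := t) hsv)
    have hsub : G.T ⊆ univ.erase G.v := by
      intro t ht
      refine Finset.mem_erase.mpr ⟨fun h => G.v_not_T ?_, Finset.mem_univ t⟩
      rw [h] at ht; exact ht
    have e2 : (∑ t ∈ G.T,
        (if ¬ G.adj s t ∧ G.adj s G.v ∧ t ∈ G.T then (1:ℝ) else 0))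
        = ∑ t ∈ univ.erase G.v,
          (if ¬ G.adj s t ∧ G.adj s G.v ∧ t ∈ G.T then (1:ℝ) else 0) :=
      Finset.sum_subset hsub (fun t _ ht => by simp [ht])
    have e3 : (∑ t ∈ G.T,
        (if ¬ G.adj s t ∧ G.adj s G.v ∧ t ∈ G.T then (1:ℝ) else 0))
        = ∑ t ∈ G.T, (if ¬ G.adj s t ∧ G.adj s G.v then (1:ℝ) else 0) :=
      Finset.sum_congr rfl (fun t ht => by simp [ht])
    rw [e1, ← e2, e3]
  rw [Finset.sum_congr rfl step1]
  have hsubIJ : G.I ∪ G.J ⊆ univ.erase G.v := by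
    intro x hx
    refine Finset.mem_erase.mpr ⟨?_, Finset.mem_univ x⟩
    rintro rfl
    rcases Finset.mem_union.mp hx with h | h
    exacts [G.v_not_I h, G.v_not_J h]
  have hzero : ∀ s ∈ univ.erase G.v, s ∉ G.I ∪ G.J →
      (∑ t ∈ G.T, (if ¬ G.adj s t ∧ G.adj s G.v then (1:ℝ) else 0)) = 0 := by
    intro s _ hs
    refine Finset.sum_eq_zero (fun t _ => ?_)
    rw [if_neg]
    rintro ⟨-, hv⟩
    exact hs (Finset.mem_union.mpr (cd_adj_source_v G hv))
  rw [← Finset.sum_subset hsubIJ hzero, Finset.sum_union G.disj_IJ]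
  congr 1
  · have hI : ∀ i ∈ G.I,
        (∑ t ∈ G.T, (if ¬ G.adj i t ∧ G.adj i G.v then (1:ℝ) else 0))
        = (G.T.card : ℝ) := by
      intro i hi
      have hone : ∀ t ∈ G.T, (if ¬ G.adj i t ∧ G.adj i G.v then (1:ℝ) else 0) = 1 := by
        intro t ht
        rw [if_pos]
        refine ⟨fun h => G.v_not_T ?_, (G.I_out i hi G.v).mpr rfl⟩
        rw [← (G.I_out i hi t).mp h]; exact ht
      rw [Finset.sum_congr rfl hone, Finset.sum_const, nsmul_eq_mul, mul_one]
    rw [Finset.sum_congr rfl hI, Finset.sum_const, nsmul_eq_mul]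
  · have hJ : ∀ j ∈ G.J,
        (∑ t ∈ G.T, (if ¬ G.adj j t ∧ G.adj j G.v then (1:ℝ) else 0))
        = (G.T.card : ℝ) - ((G.degout j : ℝ) - 1) := by
      intro j hj
      have hjv : G.adj j G.v := G.J_cites_v j hj
      have hite : ∀ t ∈ G.T, (if ¬ G.adj j t ∧ G.adj j G.v then (1:ℝ) else 0)
          = if G.adj j t then 0 else 1 := by
        intro t _
        by_cases h : G.adj j t <;> simp [h, hjv]
      rw [Finset.sum_congr rfl hite, Finset.sum_ite, Finset.sum_const, Finset.sum_const]
      have hc := Finset.card_filter_add_card_filter_not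
        (s := G.T) (p := fun t => G.adj j t)
      have hd := cd_degout_J_eq G hj
      simp only [nsmul_eq_mul, mul_zero, mul_one, zero_add]
      have hc' : ((G.T.filter (fun t => G.adj j t)).card : ℝ)
          + ((G.T.filter (fun t => ¬ G.adj j t)).card : ℝ) = (G.T.card : ℝ) := by
        exact_mod_cast congrArg (Nat.cast (R := ℝ)) hc
      have hd' : (G.degout j : ℝ) = ((G.T.filter (fun t => G.adj j t)).card : ℝ) + 1 := by
        exact_mod_cast congrArg (Nat.cast (R := ℝ)) hd
      linarith
    rw [Finset.sum_congr rfl hJ, Finset.sum_sub_distrib, Finset.sum_const, nsmul_eq_mul]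

end CDAux


/-- In a CD neighborhood graph with `degout(v) ≥ 1`,
`degin(v) + n_K ≥ 1` and `n_I + n_J + n_K ≥ 1`, the difference between the
normalized betweenness and the CD Index equals the explicit shift constant:
`B(v)/(degout(v)·(degin(v) + n_K)) − (n_I − n_J)/(n_I + n_J + n_K)
  = 2·n_J/(degin(v) + n_K)
    − (Σ_{j ∈ J} (degout(j) − 1)) / (degout(v)·(degin(v) + n_K))`. -/
theorem cd_betweenness_cd_index_shift [Fintype V] [DecidableEq V] (G : CDGraph V)
    (h1 : 1 ≤ G.degout G.v) (h2 : 1 ≤ G.degin + G.K.card)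
    (h3 : 1 ≤ G.I.card + G.J.card + G.K.card) :
    G.B / ((G.degout G.v : ℝ) * ((G.degin : ℝ) + (G.K.card : ℝ)))
      - ((G.I.card : ℝ) - (G.J.card : ℝ))
          / ((G.I.card : ℝ) + (G.J.card : ℝ) + (G.K.card : ℝ))
    = 2 * (G.J.card : ℝ) / ((G.degin : ℝ) + (G.K.card : ℝ))
      - (∑ j ∈ G.J, ((G.degout j : ℝ) - 1))
          / ((G.degout G.v : ℝ) * ((G.degin : ℝ) + (G.K.card : ℝ))) := by
  classical
  have hT : 1 ≤ G.T.card := by rwa [cd_degout_v_eq] at h1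
  have ha : (G.T.card : ℝ) ≠ 0 := by
    have : (0:ℝ) < G.T.card := by exact_mod_cast hT
    linarith
  have hN : ((G.I.card : ℝ) + (G.J.card : ℝ) + (G.K.card : ℝ)) ≠ 0 := by
    have : (1:ℝ) ≤ (G.I.card : ℝ) + (G.J.card : ℝ) + (G.K.card : ℝ) := by exact_mod_cast h3
    linarith
  have hdegin : (G.degin : ℝ) = (G.I.card : ℝ) + (G.J.card : ℝ) := by
    rw [CDGraph.degin]; push_cast; ring
  rw [cd_B_eq, cd_degout_v_eq, hdegin]
  field_simp
  ring
end
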